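/- Let m, t ∈ ℕ and a, b : Fin m → Bool. Then Re(2^{−m} · ∑_{θ : Fin m → Bool} Tr[(1 − Π_t^EPR) · Π_θ^eq · |φ⁺_{ab}⟩⟨φ⁺_{ab}|]) ≤ 2^{−(t+1)}. -/

import Mathlib

open Matrix Kronecker

/-- Single-qubit entry of the tensor-product Hadamard unitary `H^θ`:
`c = (1/√2)·(−1)^{u·v}` when the basis bit is `true` (Hadamard basis) and
`c = δ_{u,v}` when it is `false` (computational basis). -/
noncomputable def hadEntry (t u v : Bool) : ℂ :=
  if t then (((Real.sqrt 2)⁻¹ : ℝ) : ℂ) * (if u && v then -1 else 1)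
  else if u = v then 1 else 0

/-- The tensor-product Hadamard unitary `H^θ` on `m` qubits. -/
noncomputable def hadTheta {m : ℕ} (θ : Fin m → Bool) :
    Matrix (Fin m → Bool) (Fin m → Bool) ℂ :=
  Matrix.of fun u v => ∏ i, hadEntry (θ i) (u i) (v i)

/-- The `m`-qubit EPR state `|φ⁺⟩ = 2^{-m/2} ∑_v |v⟩ ⊗ |v⟩`. -/
noncomputable def epr (m : ℕ) : (Fin m → Bool) × (Fin m → Bool) → ℂ :=
  fun p => if p.1 = p.2 then (((Real.sqrt (2 ^ m))⁻¹ : ℝ) : ℂ) else 0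

/-- Bitwise XOR of Boolean strings. -/
def xorV {m : ℕ} (a b : Fin m → Bool) : Fin m → Bool := fun i => xor (a i) (b i)

/-- The inner product `b·v = ∑ i, b_i·v_i` (as a natural number). -/
def dotB {m : ℕ} (b v : Fin m → Bool) : ℕ := ∑ i, (if b i && v i then 1 else 0)

/-- The Pauli operator `X^a Z^b`, with `X^a Z^b |v⟩ = (−1)^{b·v} |v ⊕ a⟩`. -/
noncomputable def XZ {m : ℕ} (a b : Fin m → Bool) :
    Matrix (Fin m → Bool) (Fin m → Bool) ℂ :=
  Matrix.of fun u v => if u = xorV v a then (-1 : ℂ) ^ dotB b v else 0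

/-- The damaged EPR state `|φ⁺_{ab}⟩ = (1 ⊗ X^a Z^b)|φ⁺⟩`. -/
noncomputable def phiAB {m : ℕ} (a b : Fin m → Bool) :
    (Fin m → Bool) × (Fin m → Bool) → ℂ :=
  ((1 : Matrix (Fin m → Bool) (Fin m → Bool) ℂ) ⊗ₖ XZ a b).mulVec (epr m)

/-- The projector `Π_θ^eq = ∑_v (H^θ|v⟩⟨v|H^θ) ⊗ (H^θ|v⟩⟨v|H^θ)` onto states of two
`m`-qubit registers yielding equal outcomes when both are measured in the `H^θ` basis. -/
noncomputable def PiEq {m : ℕ} (θ : Fin m → Bool) :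
    Matrix ((Fin m → Bool) × (Fin m → Bool)) ((Fin m → Bool) × (Fin m → Bool)) ℂ :=
  ∑ v : Fin m → Bool,
    (hadTheta θ * Matrix.single v v 1 * hadTheta θ) ⊗ₖ
      (hadTheta θ * Matrix.single v v 1 * hadTheta θ)

/-- Hamming weight of a Boolean string. -/
def hw {m : ℕ} (a : Fin m → Bool) : ℕ := ∑ i, (if a i then 1 else 0)

/-- `Π_t^EPR = ∑_{a,b : w(a) ≤ t, w(b) ≤ t} |φ⁺_{ab}⟩⟨φ⁺_{ab}|`, the projector onto
the span of EPR pairs with at most `t` Pauli errors of each type. -/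
noncomputable def PiEPR (m t : ℕ) :
    Matrix ((Fin m → Bool) × (Fin m → Bool)) ((Fin m → Bool) × (Fin m → Bool)) ℂ :=
  ∑ a : Fin m → Bool, ∑ b : Fin m → Bool,
    if hw a ≤ t ∧ hw b ≤ t then Matrix.vecMulVec (phiAB a b) (star (phiAB a b)) else 0

lemma phiAB_apply {m : ℕ} (a b : Fin m → Bool) (p : (Fin m → Bool) × (Fin m → Bool)) :
    phiAB a b p = if p.2 = xorV p.1 a then (-1:ℂ)^(dotB b p.1) * (((Real.sqrt (2^m))⁻¹ : ℝ) : ℂ) else 0 := by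
  obtain ⟨u, v⟩ := p
  simp only [phiAB, Matrix.mulVec, dotProduct, epr]
  rw [Fintype.sum_prod_type]
  simp only [Matrix.kroneckerMap_apply, Matrix.one_apply, XZ, Matrix.of_apply]
  rw [Finset.sum_eq_single u]
  · simp
  · intro x _ hx
    simp [hx.symm]
  · simp

lemma sum_fun_prod {m : ℕ} {κ : Type*} [Fintype κ] {α : Type*} [CommSemiring α]
    (f : Fin m → κ → α) :
    ∑ u : Fin m → κ, ∏ i, f i (u i) = ∏ i, ∑ x, f i x := (Fintype.prod_sum f).symm

lemma xorV_eq_iff {m : ℕ} (u a a' : Fin m → Bool) : xorV u a = xorV u a' ↔ a = a' := by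
  simp only [funext_iff, xorV]
  constructor <;> intro h i <;> have := h i <;> revert this <;>
    cases u i <;> cases a i <;> cases a' i <;> simp

lemma neg_one_pow_dotB {m : ℕ} (b u : Fin m → Bool) :
    (-1 : ℂ) ^ dotB b u = ∏ i, (-1 : ℂ) ^ (if b i && u i then 1 else 0) := by
  rw [dotB, ← Finset.prod_pow_eq_pow_sum]

lemma sum_sign {m : ℕ} (b b' : Fin m → Bool) :
    ∑ u : Fin m → Bool, ((-1:ℂ)^(dotB b' u) * (-1:ℂ)^(dotB b u)) =
      if b = b' then ((2:ℂ)^m) else 0 := by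
  have : ∀ u : Fin m → Bool, ((-1:ℂ)^(dotB b' u) * (-1:ℂ)^(dotB b u)) =
      ∏ i, ((-1:ℂ)^(if b' i && u i then 1 else 0) * (-1:ℂ)^(if b i && u i then 1 else 0)) := by
    intro u
    rw [neg_one_pow_dotB, neg_one_pow_dotB, Finset.prod_mul_distrib]
  simp only [this]
  rw [sum_fun_prod (fun i x => ((-1:ℂ)^(if b' i && x then 1 else 0) * (-1:ℂ)^(if b i && x then 1 else 0)))]
  have hfac : ∀ i, (∑ x : Bool, ((-1:ℂ)^(if b' i && x then 1 else 0) * (-1:ℂ)^(if b i && x then 1 else 0)))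
      = if b i = b' i then 2 else 0 := by
    intro i
    cases hb : b i <;> cases hb' : b' i <;> simp [Fintype.sum_bool] <;> ring
  simp only [hfac]
  by_cases h : b = b'
  · subst h; simp
  · rw [if_neg h]
    obtain ⟨i, hi⟩ : ∃ i, ¬ (b i = b' i) := by
      by_contra hc; push_neg at hc; exact h (funext hc)
    exact Finset.prod_eq_zero (Finset.mem_univ i) (if_neg hi)

lemma sqrt_pow_inv_sq (m : ℕ) :
    ((((Real.sqrt (2^m))⁻¹ : ℝ) : ℂ)) * ((((Real.sqrt (2^m))⁻¹ : ℝ) : ℂ)) = ((2:ℂ)^m)⁻¹ := by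
  rw [← Complex.ofReal_mul]
  rw [← mul_inv, Real.mul_self_sqrt (by positivity)]
  push_cast
  simp

lemma phi_inner {m : ℕ} (a b a' b' : Fin m → Bool) :
    star (phiAB a' b') ⬝ᵥ phiAB a b = if a = a' ∧ b = b' then 1 else 0 := by
  simp only [dotProduct, Pi.star_apply]
  rw [Fintype.sum_prod_type]
  simp only [phiAB_apply]
  have step : ∀ u : Fin m → Bool,
      (∑ v : Fin m → Bool, star (if v = xorV u a' then (-1:ℂ)^(dotB b' u) * (((Real.sqrt (2^m))⁻¹ : ℝ) : ℂ) else 0) *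
        (if v = xorV u a then (-1:ℂ)^(dotB b u) * (((Real.sqrt (2^m))⁻¹ : ℝ) : ℂ) else 0))
      = if a = a' then ((-1:ℂ)^(dotB b' u) * (-1:ℂ)^(dotB b u)) * ((2:ℂ)^m)⁻¹ else 0 := by
    intro u
    rw [Finset.sum_eq_single (xorV u a)]
    · rw [if_pos rfl]
      by_cases h : a = a'
      · subst h
        rw [if_pos rfl, if_pos rfl]
        simp only [star_mul', star_pow, star_neg, star_one, Complex.star_def, Complex.conj_ofReal]
        rw [← sqrt_pow_inv_sq m]
        ring
      · rw [if_neg, if_neg h]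
        · simp
        · rw [xorV_eq_iff]; exact h
    · intro v _ hv; rw [if_neg hv, mul_zero]
    · simp
  simp only [step]
  by_cases h : a = a'
  · simp only [if_pos h, ← Finset.sum_mul, sum_sign]
    by_cases hb : b = b'
    · rw [if_pos hb, if_pos ⟨h, hb⟩, mul_inv_cancel₀ (pow_ne_zero m two_ne_zero)]
    · rw [if_neg hb, if_neg (fun hc => hb hc.2), zero_mul]
  · simp only [if_neg h, Finset.sum_const_zero]
    rw [if_neg (fun hc => h hc.1)]

lemma c4 : ((Real.sqrt 2 : ℝ):ℂ)^4 = 4 := by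
  have : Real.sqrt 2 ^ 4 = 4 := by
    rw [show (4:ℕ) = 2*2 by norm_num, pow_mul, Real.sq_sqrt (by norm_num)]
    norm_num
  rw [← Complex.ofReal_pow, this]
  norm_num

lemma qubit_sum (θi ai bi x1 x2 : Bool) :
    (∑ y : Bool, ∑ x : Bool,
      hadEntry θi x1 y * hadEntry θi x2 y * hadEntry θi y x * hadEntry θi y (xor x ai) *
        (-1:ℂ)^(if bi && x then 1 else 0))
    = (if ((θi = true → bi = false) ∧ (θi = false → ai = false)) then (1:ℂ) else 0) *
      (if x2 = xor x1 ai then 1 else 0) * (-1:ℂ)^(if bi && x1 then 1 else 0) := by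
  cases θi <;> cases ai <;> cases bi <;> cases x1 <;> cases x2 <;>
    simp [hadEntry, Fintype.sum_bool] <;> ring_nf <;> simp [c4] <;> norm_num

lemma HEH_apply {m : ℕ} (θ : Fin m → Bool) (v x y : Fin m → Bool) :
    (hadTheta θ * Matrix.single v v 1 * hadTheta θ : Matrix (Fin m → Bool) (Fin m → Bool) ℂ) x y
      = hadTheta θ x v * hadTheta θ v y := by
  simp [Matrix.mul_apply, Matrix.single, ite_and, mul_ite, ite_mul,
    zero_mul, mul_zero, Finset.sum_ite_eq, Finset.sum_ite_eq']

lemma prod_ite_one_zero {m : ℕ} (P : Fin m → Prop) [∀ i, Decidable (P i)] :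
    ∏ i, (if P i then (1:ℂ) else 0) = if ∀ i, P i then 1 else 0 := by
  by_cases h : ∀ i, P i
  · rw [if_pos h]; exact Finset.prod_eq_one fun i _ => if_pos (h i)
  · rw [if_neg h]
    push_neg at h
    obtain ⟨i, hi⟩ := h
    exact Finset.prod_eq_zero (Finset.mem_univ i) (if_neg hi)

lemma PiEq_mulVec {m : ℕ} (θ a b : Fin m → Bool) :
    (PiEq θ).mulVec (phiAB a b) = fun p =>
      (if (∀ i, (θ i = true → b i = false) ∧ (θ i = false → a i = false)) then (1:ℂ) else 0)
        * phiAB a b p := by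
  funext p
  obtain ⟨u1, u2⟩ := p
  set r : ℂ := (((Real.sqrt (2^m))⁻¹ : ℝ) : ℂ) with hr
  set F : Fin m → Bool → Bool → ℂ := fun i y x =>
    hadEntry (θ i) (u1 i) y * hadEntry (θ i) (u2 i) y * hadEntry (θ i) y x *
      hadEntry (θ i) y (xor x (a i)) * (-1:ℂ)^(if b i && x then 1 else 0) with hF
  have hq : ∀ q : (Fin m → Bool) × (Fin m → Bool),
      PiEq θ (u1, u2) q = ∑ v, (hadTheta θ u1 v * hadTheta θ v q.1) *
        (hadTheta θ u2 v * hadTheta θ v q.2) := by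
    intro q
    simp [PiEq, Matrix.sum_apply, HEH_apply]
  have prodF : ∀ v w : Fin m → Bool, (∏ i, F i (v i) (w i)) =
      hadTheta θ u1 v * hadTheta θ u2 v * hadTheta θ v w * hadTheta θ v (xorV w a) *
        (-1:ℂ)^(dotB b w) := by
    intro v w
    simp only [hF, hadTheta, Matrix.of_apply, neg_one_pow_dotB, xorV]
    rw [Finset.prod_mul_distrib, Finset.prod_mul_distrib, Finset.prod_mul_distrib,
      Finset.prod_mul_distrib]
  have lhs1 : (PiEq θ).mulVec (phiAB a b) (u1, u2)
      = ∑ w1 : Fin m → Bool, ∑ w2 : Fin m → Bool,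
          PiEq θ (u1, u2) (w1, w2) * phiAB a b (w1, w2) := by
    rw [Matrix.mulVec, dotProduct]
    exact Fintype.sum_prod_type _
  rw [lhs1]
  have step2 : ∀ w1 : Fin m → Bool,
      (∑ w2 : Fin m → Bool, PiEq θ (u1, u2) (w1, w2) * phiAB a b (w1, w2))
      = ∑ v : Fin m → Bool, (∏ i, F i (v i) (w1 i)) * r := by
    intro w1
    rw [Finset.sum_eq_single (xorV w1 a)]
    · rw [hq, phiAB_apply, if_pos rfl, Finset.sum_mul]
      refine Finset.sum_congr rfl fun v _ => ?_
      rw [prodF]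
      ring
    · intro w2 _ hw2
      rw [phiAB_apply, if_neg hw2, mul_zero]
    · simp
  simp only [step2]
  rw [Finset.sum_comm]
  have step3 : ∀ v : Fin m → Bool,
      (∑ w1 : Fin m → Bool, (∏ i, F i (v i) (w1 i)) * r)
      = (∏ i, ∑ x : Bool, F i (v i) x) * r := by
    intro v
    rw [← Finset.sum_mul, sum_fun_prod (fun i x => F i (v i) x)]
  simp only [step3]
  rw [← Finset.sum_mul, sum_fun_prod (fun i y => ∑ x : Bool, F i y x)]
  have step4 : ∀ i : Fin m, (∑ y : Bool, ∑ x : Bool, F i y x)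
      = (if ((θ i = true → b i = false) ∧ (θ i = false → a i = false)) then (1:ℂ) else 0) *
        (if u2 i = xor (u1 i) (a i) then 1 else 0) * (-1:ℂ)^(if b i && u1 i then 1 else 0) := by
    intro i
    exact qubit_sum (θ i) (a i) (b i) (u1 i) (u2 i)
  simp only [step4]
  rw [Finset.prod_mul_distrib, Finset.prod_mul_distrib, prod_ite_one_zero,
    prod_ite_one_zero, ← neg_one_pow_dotB, phiAB_apply]
  dsimp only
  by_cases hG : ∀ i, (θ i = true → b i = false) ∧ (θ i = false → a i = false)
  · rw [if_pos hG]
    by_cases hE : u2 = xorV u1 a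
    · rw [if_pos (show ∀ i, u2 i = (u1 i ^^ a i) from fun i => congrFun hE i), if_pos hE]
      ring
    · rw [if_neg (show ¬ ∀ i, u2 i = (u1 i ^^ a i) from fun hc => hE (funext hc)), if_neg hE]
      ring
  · rw [if_neg hG]
    ring

lemma vecMulVec_mulVec' {n : Type*} [Fintype n] (x y z : n → ℂ) :
    (Matrix.vecMulVec x y).mulVec z = (y ⬝ᵥ z) • x := by
  funext i
  simp only [Matrix.mulVec, Matrix.vecMulVec_apply, dotProduct, Pi.smul_apply,
    smul_eq_mul, Finset.sum_mul]
  exact Finset.sum_congr rfl fun j _ => by ring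

lemma sum_mulVec' {n ι : Type*} [Fintype n] [Fintype ι] (M : ι → Matrix n n ℂ) (v : n → ℂ) :
    (∑ i, M i).mulVec v = ∑ i, (M i).mulVec v := by
  funext p
  simp only [Matrix.mulVec, dotProduct, Matrix.sum_apply, Finset.sum_mul,
    Finset.sum_apply]
  exact Finset.sum_comm

lemma PiEPR_mulVec {m t : ℕ} (a b : Fin m → Bool) :
    (PiEPR m t).mulVec (phiAB a b) =
      (if hw a ≤ t ∧ hw b ≤ t then (1:ℂ) else 0) • phiAB a b := by
  unfold PiEPR
  rw [sum_mulVec']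
  have inner : ∀ a' : Fin m → Bool,
      ((∑ b' : Fin m → Bool, if hw a' ≤ t ∧ hw b' ≤ t then
          Matrix.vecMulVec (phiAB a' b') (star (phiAB a' b')) else 0).mulVec (phiAB a b))
      = if a' = a then (if hw a ≤ t ∧ hw b ≤ t then (1:ℂ) else 0) • phiAB a b else 0 := by
    intro a'
    rw [sum_mulVec']
    rw [Finset.sum_eq_single b]
    · by_cases hc : hw a' ≤ t ∧ hw b ≤ t
      · rw [if_pos hc, vecMulVec_mulVec', phi_inner]
        by_cases ha : a' = a
        · subst ha
          rw [if_pos ⟨rfl, rfl⟩, if_pos rfl, if_pos hc, one_smul]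
        · rw [if_neg (fun hh : a = a' ∧ b = b => ha hh.1.symm), if_neg ha, zero_smul]
      · rw [if_neg hc, Matrix.zero_mulVec]
        by_cases ha : a' = a
        · subst ha
          rw [if_pos rfl, if_neg hc, zero_smul]
        · rw [if_neg ha]
    · intro b' _ hb'
      by_cases hc : hw a' ≤ t ∧ hw b' ≤ t
      · rw [if_pos hc, vecMulVec_mulVec', phi_inner,
          if_neg (fun hh : a = a' ∧ b = b' => hb' hh.2.symm), zero_smul]
      · rw [if_neg hc, Matrix.zero_mulVec]
    · simp
  simp only [inner]
  rw [Finset.sum_ite_eq' Finset.univ a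
    (fun _ => (if hw a ≤ t ∧ hw b ≤ t then (1:ℂ) else 0) • phiAB a b)]
  simp

lemma trace_mul_vecMulVec {n : Type*} [Fintype n] (M : Matrix n n ℂ) (ψ : n → ℂ) :
    Matrix.trace (M * Matrix.vecMulVec ψ (star ψ)) = star ψ ⬝ᵥ M.mulVec ψ := by
  simp only [Matrix.trace, Matrix.diag_apply, Matrix.mul_apply, Matrix.vecMulVec_apply,
    Pi.star_apply, dotProduct, Matrix.mulVec, Finset.mul_sum]
  exact Finset.sum_congr rfl fun i _ => Finset.sum_congr rfl fun j _ => by ring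

lemma trace_term {m t : ℕ} (a b θ : Fin m → Bool) :
    Matrix.trace ((1 - PiEPR m t) * PiEq θ * Matrix.vecMulVec (phiAB a b) (star (phiAB a b)))
      = (if (∀ i, (θ i = true → b i = false) ∧ (θ i = false → a i = false)) then (1:ℂ) else 0) *
        (1 - (if hw a ≤ t ∧ hw b ≤ t then (1:ℂ) else 0)) := by
  rw [trace_mul_vecMulVec, ← Matrix.mulVec_mulVec]
  have h1 : (PiEq θ).mulVec (phiAB a b)
      = (if (∀ i, (θ i = true → b i = false) ∧ (θ i = false → a i = false)) then (1:ℂ) else 0)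
        • phiAB a b := by
    rw [PiEq_mulVec]; rfl
  rw [h1, Matrix.mulVec_smul, Matrix.sub_mulVec, Matrix.one_mulVec, PiEPR_mulVec,
    dotProduct_smul, dotProduct_sub, dotProduct_smul, phi_inner]
  have h2 : (if a = a ∧ b = b then (1:ℂ) else 0) = 1 := if_pos ⟨rfl, rfl⟩
  rw [h2]
  simp only [smul_eq_mul]
  ring

lemma hw_le_m {m : ℕ} (a : Fin m → Bool) : hw a ≤ m := by
  unfold hw
  calc (∑ i : Fin m, if a i then 1 else 0) ≤ ∑ _i : Fin m, 1 :=
        Finset.sum_le_sum fun i _ => by split <;> norm_num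
    _ = m := by simp

lemma sum_good_le {m t : ℕ} (a b : Fin m → Bool) (h : t + 1 ≤ hw a ∨ t + 1 ≤ hw b) :
    (∑ θ : Fin m → Bool, if (∀ i, (θ i = true → b i = false) ∧ (θ i = false → a i = false))
        then (1:ℕ) else 0)
      ≤ 2 ^ (m - (t+1)) := by
  have step1 : ∀ θ : Fin m → Bool,
      (if (∀ i, (θ i = true → b i = false) ∧ (θ i = false → a i = false)) then (1:ℕ) else 0)
      = ∏ i, (if ((θ i = true → b i = false) ∧ (θ i = false → a i = false)) then (1:ℕ) else 0) := by
    intro θ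
    by_cases hθ : ∀ i, (θ i = true → b i = false) ∧ (θ i = false → a i = false)
    · rw [if_pos hθ]
      exact (Finset.prod_eq_one fun i _ => if_pos (hθ i)).symm
    · rw [if_neg hθ]
      obtain ⟨i, hi⟩ := not_forall.mp hθ
      exact (Finset.prod_eq_zero (Finset.mem_univ i) (if_neg hi : _ = (0:ℕ))).symm
  simp only [step1]
  rw [sum_fun_prod (fun i x => if ((x = true → b i = false) ∧ (x = false → a i = false))
    then (1:ℕ) else 0)]
  have key : ∀ c : Fin m → Bool, t + 1 ≤ hw c →
      (∀ i, ((if ((true = true → b i = false) ∧ (true = false → a i = false)) then (1:ℕ) else 0)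
        + (if ((false = true → b i = false) ∧ (false = false → a i = false)) then (1:ℕ) else 0))
        ≤ (if c i then 1 else 2)) →
      (∏ i, ∑ x : Bool, if ((x = true → b i = false) ∧ (x = false → a i = false))
        then (1:ℕ) else 0) ≤ 2 ^ (m - (t+1)) := by
    intro c hc hptwise
    calc (∏ i, ∑ x : Bool, if ((x = true → b i = false) ∧ (x = false → a i = false))
          then (1:ℕ) else 0)
        ≤ ∏ i, (if c i then 1 else 2) := by
          refine Finset.prod_le_prod' fun i _ => ?_
          rw [Fintype.sum_bool]
          exact hptwise i
      _ = ∏ i, 2 ^ (if c i then 0 else 1) := by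
          refine Finset.prod_congr rfl fun i _ => ?_
          cases c i <;> simp
      _ = 2 ^ (∑ i, if c i then 0 else 1) := Finset.prod_pow_eq_pow_sum _ _ _
      _ ≤ 2 ^ (m - (t+1)) := by
          refine Nat.pow_le_pow_right (by norm_num) ?_
          have hsum : (∑ i : Fin m, if c i then 0 else 1) + hw c = m := by
            rw [hw, ← Finset.sum_add_distrib]
            calc (∑ i : Fin m, ((if c i then 0 else 1) + if c i then 1 else 0))
                = ∑ _i : Fin m, 1 := Finset.sum_congr rfl fun i _ => by cases c i <;> simp
              _ = m := by simp
          omega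
  rcases h with h | h
  · exact key a h fun i => by cases a i <;> cases b i <;> simp
  · exact key b h fun i => by cases a i <;> cases b i <;> simp

/-- The bound `p_{ab} ≤ 2^{-(t+1)}` from the paper's SSL security proof:
averaging over a uniform basis choice `θ`, the overlap of the damaged EPR state
`|φ⁺_{ab}⟩` with the equality test `Π_θ^eq` outside the span of EPR pairs with at
most `t` Pauli errors is at most `2^{-(t+1)}`. -/
theorem pab_bound (m t : ℕ) (a b : Fin m → Bool) :
    ((2 : ℝ) ^ m)⁻¹ *
        (∑ θ : Fin m → Bool,
          Matrix.trace ((1 - PiEPR m t) * PiEq θ *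
            Matrix.vecMulVec (phiAB a b) (star (phiAB a b)))).re ≤
      ((2 : ℝ) ^ (t + 1))⁻¹ := by
  simp only [trace_term]
  by_cases hgood : hw a ≤ t ∧ hw b ≤ t
  · simp only [if_pos hgood, sub_self, mul_zero, Finset.sum_const_zero, Complex.zero_re]
    positivity
  · simp only [if_neg hgood, sub_zero, mul_one]
    have hcast : (∑ θ : Fin m → Bool, if (∀ i, (θ i = true → b i = false) ∧
          (θ i = false → a i = false)) then (1:ℂ) else 0)
        = ((∑ θ : Fin m → Bool, if (∀ i, (θ i = true → b i = false) ∧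
          (θ i = false → a i = false)) then (1:ℕ) else 0 : ℕ) : ℂ) := by
      push_cast
      exact Finset.sum_congr rfl fun θ _ => by split <;> simp
    rw [hcast, Complex.natCast_re]
    have h' : t + 1 ≤ hw a ∨ t + 1 ≤ hw b := by
      rcases not_and_or.mp hgood with h | h
      · exact Or.inl (by omega)
      · exact Or.inr (by omega)
    have hN := sum_good_le a b h'
    have htm : t + 1 ≤ m := by
      rcases h' with h | h
      · exact le_trans h (hw_le_m a)
      · exact le_trans h (hw_le_m b)
    have hfin : ((2:ℝ)^m)⁻¹ * (2:ℝ)^(m-(t+1)) = ((2:ℝ)^(t+1))⁻¹ := by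
      have hpow : (2:ℝ)^(m-(t+1)) * (2:ℝ)^(t+1) = 2^m := by
        rw [← pow_add, Nat.sub_add_cancel htm]
      field_simp
      linarith [hpow]
    calc ((2:ℝ)^m)⁻¹ * ((∑ θ : Fin m → Bool, if (∀ i, (θ i = true → b i = false) ∧
          (θ i = false → a i = false)) then (1:ℕ) else 0 : ℕ) : ℝ)
        ≤ ((2:ℝ)^m)⁻¹ * (2:ℝ)^(m-(t+1)) := by
          apply mul_le_mul_of_nonneg_left _ (by positivity)
          exact_mod_cast hN
      _ = ((2:ℝ)^(t+1))⁻¹ := hfin
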